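/- Under Assumption: f ℓ-smooth, f(·,y) L-Lipschitz, f(x,·) concave on convex Y with diameter D, and GDA updates with η_y = 1/ℓ, the quantity Δ_{t−1} = Φ(x_{t−1}) − f(x_{t−1}, y_{t−1}) satisfies, for any s ≤ t−1: Δ_{t−1} ≤ η_x L²(2t − 2s − 1) + (ℓ/2)(‖y_{t−1} − y*(x_s)‖² − ‖y_t − y*(x_s)‖²) + (f(x_t, y_t) − f(x_{t−1}, y_{t−1})), where y*(x) ∈ argmax_{y∈Y} f(x,y). -/

import Mathlib

open Set Filter Topology
open scoped RealInnerProductSpace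

variable {E : Type*} [NormedAddCommGroup E] [InnerProductSpace ℝ E] [CompleteSpace E]

/-- derivative of h along line t ↦ y + t • v -/
lemma line_hasDerivAt {h : E → ℝ} {g : E} {v : E} (y : E) (t : ℝ)
    (hg : HasGradientAt h g (y + t • v)) :
    HasDerivAt (fun s : ℝ => h (y + s • v)) ⟪g, v⟫ t := by
  have hc : HasDerivAt (fun s : ℝ => y + s • v) v t := by
    simpa using (hasDerivAt_id t).smul_const v
  have := hg.hasFDerivAt.comp_hasDerivAt t hc
  have h2 : HasDerivAt (fun s : ℝ => h (y + s • v)) ((InnerProductSpace.toDual ℝ E g) v) t := this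
  simpa using h2

lemma grad_norm_le {h : E → ℝ} {g : E} {x : E} {L : ℝ} (hL : 0 ≤ L)
    (hg : HasGradientAt h g x) (hlip : ∀ a b, |h a - h b| ≤ L * ‖a - b‖) : ‖g‖ ≤ L := by
  have hder : HasDerivAt (fun s : ℝ => h (x + s • g)) ⟪g, g⟫ 0 := by
    apply line_hasDerivAt; simpa using hg
  have hslope := hasDerivAt_iff_tendsto_slope.mp hder
  have hb : ∀ t : ℝ, t ≠ 0 → |slope (fun s : ℝ => h (x + s • g)) 0 t| ≤ L * ‖g‖ := by
    intro t ht
    rw [slope_def_field]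
    rw [sub_zero, abs_div]
    have h1 : |h (x + t • g) - h (x + (0:ℝ) • g)| ≤ L * ‖t • g‖ := by
      have := hlip (x + t • g) (x + (0:ℝ) • g)
      simpa using this
    rw [norm_smul] at h1
    rw [div_le_iff₀ (by positivity : (0:ℝ) < |t|)]
    calc |h (x + t • g) - h (x + (0:ℝ) • g)| ≤ L * (‖t‖ * ‖g‖) := h1
      _ = L * ‖g‖ * |t| := by rw [Real.norm_eq_abs]; ring
  have key : ⟪g, g⟫ ≤ L * ‖g‖ := by
    have hne : (𝓝[≠] (0:ℝ)).NeBot := by infer_instance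
    refine le_of_tendsto hslope ?_
    filter_upwards [self_mem_nhdsWithin] with t ht
    exact le_trans (le_abs_self _) (hb t ht)
  rw [real_inner_self_eq_norm_mul_norm] at key
  rcases eq_or_lt_of_le (norm_nonneg g) with h0 | h0
  · simp [← h0]; linarith
  · nlinarith

lemma smooth_lower {h : E → ℝ} {g : E → E} {ℓ : ℝ} (hℓ : 0 < ℓ)
    (hg : ∀ a, HasGradientAt h (g a) a)
    (hlip : ∀ a b, ‖g a - g b‖ ≤ ℓ * ‖a - b‖) (y v : E) :
    h y + ⟪g y, v⟫ - ℓ / 2 * ‖v‖ ^ 2 ≤ h (y + v) := by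
  set φ : ℝ → ℝ := fun t => h (y + t • v) - t * ⟪g y, v⟫ + ℓ / 2 * ‖v‖ ^ 2 * t ^ 2 with hφ
  have hder : ∀ t : ℝ, HasDerivAt φ
      (⟪g (y + t • v), v⟫ - ⟪g y, v⟫ + ℓ * ‖v‖ ^ 2 * t) t := by
    intro t
    have h1 : HasDerivAt (fun s : ℝ => h (y + s • v)) ⟪g (y + t • v), v⟫ t :=
      line_hasDerivAt y t (hg _)
    have h2 : HasDerivAt (fun s : ℝ => s * ⟪g y, v⟫) ⟪g y, v⟫ t := by
      simpa using (hasDerivAt_id t).mul_const (⟪g y, v⟫)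
    have h3 : HasDerivAt (fun s : ℝ => ℓ / 2 * ‖v‖ ^ 2 * s ^ 2) (ℓ / 2 * ‖v‖ ^ 2 * (2 * t)) t := by
      simpa using (hasDerivAt_pow 2 t).const_mul (ℓ / 2 * ‖v‖ ^ 2)
    have := (h1.sub h2).add h3
    exact this.congr_deriv (by ring)
  have hmono : MonotoneOn φ (Icc (0:ℝ) 1) := by
    apply monotoneOn_of_deriv_nonneg (convex_Icc 0 1)
    · exact Continuous.continuousOn
        (continuous_iff_continuousAt.mpr fun t => (hder t).continuousAt)
    · intro t ht
      exact (hder t).differentiableAt.differentiableWithinAt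
    · intro t ht
      rw [interior_Icc] at ht
      rw [(hder t).deriv]
      have hb : ‖g (y + t • v) - g y‖ ≤ ℓ * (t * ‖v‖) := by
        have := hlip (y + t • v) y
        simpa [norm_smul, abs_of_pos ht.1] using this
      have hinner : -(ℓ * (t * ‖v‖) * ‖v‖) ≤ ⟪g (y + t • v) - g y, v⟫ := by
        have h1 := abs_real_inner_le_norm (g (y + t • v) - g y) v
        have h2 : ‖g (y + t • v) - g y‖ * ‖v‖ ≤ ℓ * (t * ‖v‖) * ‖v‖ := by
          apply mul_le_mul_of_nonneg_right hb (norm_nonneg v)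
        have := neg_abs_le (⟪g (y + t • v) - g y, v⟫)
        linarith [abs_le.mp h1]
      rw [inner_sub_left] at hinner
      nlinarith [norm_nonneg v, sq_nonneg ‖v‖]
  have h01 := hmono (left_mem_Icc.mpr zero_le_one) (right_mem_Icc.mpr zero_le_one) zero_le_one
  simp only [hφ] at h01
  simp only [zero_smul, add_zero, one_smul, zero_mul, mul_zero, sub_zero, zero_pow, one_pow,
    mul_one] at h01
  linarith

lemma concave_grad {h : E → ℝ} {g : E} {Y : Set E} (hconc : ConcaveOn ℝ Y h)
    {y z : E} (hy : y ∈ Y) (hz : z ∈ Y) (hg : HasGradientAt h g y) :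
    h z ≤ h y + ⟪g, z - y⟫ := by
  have hder : HasDerivAt (fun s : ℝ => h (y + s • (z - y))) ⟪g, z - y⟫ 0 := by
    apply line_hasDerivAt; simpa using hg
  have hslope := hasDerivAt_iff_tendsto_slope.mp hder
  have hslope' : Tendsto (slope (fun s : ℝ => h (y + s • (z - y))) 0) (𝓝[>] (0:ℝ))
      (𝓝 (⟪g, z - y⟫)) :=
    hslope.mono_left (nhdsWithin_mono _ (fun t ht => by simpa using ne_of_gt ht))
  have hlb : ∀ᶠ t in 𝓝[>] (0:ℝ), h z - h y ≤ slope (fun s : ℝ => h (y + s • (z - y))) 0 t := by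
    filter_upwards [Ioc_mem_nhdsGT_of_mem (by norm_num : (0:ℝ) ∈ Ico (0:ℝ) 1)] with t ht
    rw [slope_def_field, sub_zero, le_div_iff₀ ht.1]
    have hpt : y + t • (z - y) = (1 - t) • y + t • z := by
      rw [smul_sub, sub_smul, one_smul]; abel
    have hcc := hconc.2 hy hz (by linarith [ht.2] : (0:ℝ) ≤ 1 - t) (le_of_lt ht.1) (by ring)
    rw [← hpt] at hcc
    simp only [smul_eq_mul, zero_smul, add_zero] at hcc ⊢
    nlinarith [hcc]
  have := ge_of_tendsto hslope' hlb
  linarith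

/-- Block-wise bound on the primal gap `Δ_{t−1} = Φ(x_{t−1}) − f(x_{t−1},y_{t−1})`
for GDA in the nonconvex-concave setting (stated with shifted index: for all `s ≤ t`,
`Δ_t ≤ η_x L²(2(t+1) − 2s − 1) + (ℓ/2)(‖y_t − y*(x_s)‖² − ‖y_{t+1} − y*(x_s)‖²)
  + (f(x_{t+1},y_{t+1}) − f(x_t,y_t))`). -/
theorem statement14 {m n : ℕ} (f : EuclideanSpace ℝ (Fin m) → EuclideanSpace ℝ (Fin n) → ℝ)
    (ℓ L ηx D : ℝ) (hℓ : 0 < ℓ) (hL : 0 < L) (hηx : 0 < ηx) (hD : 0 ≤ D)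
    (Y : Set (EuclideanSpace ℝ (Fin n))) (hYconv : Convex ℝ Y) (hYcomp : IsCompact Y)
    (hYne : Y.Nonempty)
    (hYdiam : ∀ y ∈ Y, ∀ y' ∈ Y, ‖y - y'‖ ≤ D)
    (gx : EuclideanSpace ℝ (Fin m) → EuclideanSpace ℝ (Fin n) → EuclideanSpace ℝ (Fin m))
    (gy : EuclideanSpace ℝ (Fin m) → EuclideanSpace ℝ (Fin n) → EuclideanSpace ℝ (Fin n))
    (hgx : ∀ x y, HasGradientAt (fun x' => f x' y) (gx x y) x)
    (hgy : ∀ x y, HasGradientAt (fun y' => f x y') (gy x y) y)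
    (hsmooth : ∀ x x' y y',
      ‖gx x y - gx x' y'‖ ≤ ℓ * (‖x - x'‖ + ‖y - y'‖) ∧
      ‖gy x y - gy x' y'‖ ≤ ℓ * (‖x - x'‖ + ‖y - y'‖))
    (hconc : ∀ x, ConcaveOn ℝ Y (f x))
    (hLip : ∀ y ∈ Y, ∀ x x', |f x y - f x' y| ≤ L * ‖x - x'‖)
    (Φ : EuclideanSpace ℝ (Fin m) → ℝ) (hΦ : ∀ x, Φ x = sSup (f x '' Y))
    (ystar : EuclideanSpace ℝ (Fin m) → EuclideanSpace ℝ (Fin n))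
    (hystar : ∀ x, ystar x ∈ Y ∧ IsMaxOn (f x) Y (ystar x))
    (P : EuclideanSpace ℝ (Fin n) → EuclideanSpace ℝ (Fin n))
    (hP : ∀ z, P z ∈ Y ∧ ∀ y ∈ Y, ⟪z - P z, y - P z⟫ ≤ 0)
    (x : ℕ → EuclideanSpace ℝ (Fin m)) (y : ℕ → EuclideanSpace ℝ (Fin n))
    (hy0 : y 0 ∈ Y)
    (hxupd : ∀ t, x (t + 1) = x t - ηx • gx (x t) (y t))
    (hyupd : ∀ t, y (t + 1) = P (y t + (1 / ℓ) • gy (x t) (y t))) :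
    ∀ s t : ℕ, s ≤ t →
      Φ (x t) - f (x t) (y t) ≤
        ηx * L ^ 2 * (2 * (t : ℝ) - 2 * (s : ℝ) + 1)
          + ℓ / 2 * (‖y t - ystar (x s)‖ ^ 2 - ‖y (t + 1) - ystar (x s)‖ ^ 2)
          + (f (x (t + 1)) (y (t + 1)) - f (x t) (y t)) := by
  -- membership of iterates
  have hmemY : ∀ k, y k ∈ Y := by
    intro k
    induction k with
    | zero => exact hy0
    | succ k _ => rw [hyupd k]; exact (hP _).1
  -- gradient norm bound
  have hgxn : ∀ k, ‖gx (x k) (y k)‖ ≤ L := fun k =>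
    grad_norm_le hL.le (hgx (x k) (y k)) (fun a b => hLip (y k) (hmemY k) a b)
  -- step size bound
  have hxstep : ∀ k, ‖x (k + 1) - x k‖ ≤ ηx * L := by
    intro k
    rw [hxupd k]
    have he : x k - ηx • gx (x k) (y k) - x k = -(ηx • gx (x k) (y k)) := by abel
    rw [he, norm_neg, norm_smul, Real.norm_eq_abs, abs_of_pos hηx]
    exact mul_le_mul_of_nonneg_left (hgxn k) hηx.le
  -- distance bound
  have hxdist : ∀ s t : ℕ, s ≤ t → ‖x t - x s‖ ≤ ((t : ℝ) - s) * (ηx * L) := by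
    intro s t hst
    induction t with
    | zero =>
      have hs0 : s = 0 := Nat.le_zero.mp hst
      subst hs0; simp
    | succ t ih =>
      rcases Nat.lt_or_ge s (t + 1) with hlt | hge
      · have hst' : s ≤ t := Nat.lt_succ_iff.mp hlt
        have h1 := ih hst'
        have htri : ‖x (t + 1) - x s‖ ≤ ‖x (t + 1) - x t‖ + ‖x t - x s‖ := by
          have := dist_triangle (x (t + 1)) (x t) (x s)
          simpa [dist_eq_norm] using this
        have h2 := hxstep t
        have hcast : ((t + 1 : ℕ) : ℝ) - s = ((t : ℝ) - s) + 1 := by push_cast; ring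
        rw [hcast]
        nlinarith [norm_nonneg (x (t + 1) - x t)]
      · have hs : s = t + 1 := le_antisymm hst hge
        subst hs; simp
  -- Phi equals value at ystar
  have hΦeq : ∀ x0, Φ x0 = f x0 (ystar x0) := by
    intro x0
    rw [hΦ x0]
    apply le_antisymm
    · apply csSup_le (hYne.image _)
      rintro v ⟨w, hw, rfl⟩
      exact isMaxOn_iff.mp (hystar x0).2 w hw
    · exact le_csSup ⟨f x0 (ystar x0), by
        rintro v ⟨w, hw, rfl⟩; exact isMaxOn_iff.mp (hystar x0).2 w hw⟩
        ⟨_, (hystar x0).1, rfl⟩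
  intro s t hst
  set ys := ystar (x s) with hys
  have hysY : ys ∈ Y := (hystar (x s)).1
  set G := gy (x t) (y t) with hG
  have hyt1 : y (t + 1) = P (y t + (1 / ℓ) • G) := hyupd t
  -- smoothness in y at fixed x t
  have hsmY : ∀ a b, ‖gy (x t) a - gy (x t) b‖ ≤ ℓ * ‖a - b‖ := by
    intro a b
    have := (hsmooth (x t) (x t) a b).2
    simpa using this
  -- smooth lower bound (ascent lemma)
  have c2 : f (x t) (y t) + ⟪G, y (t + 1) - y t⟫ - ℓ / 2 * ‖y (t + 1) - y t‖ ^ 2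
      ≤ f (x t) (y (t + 1)) := by
    have := smooth_lower hℓ (fun a => hgy (x t) a) hsmY (y t) (y (t + 1) - y t)
    simpa using this
  -- concavity first-order
  have c1 : f (x t) ys ≤ f (x t) (y t) + ⟪G, ys - y t⟫ :=
    concave_grad (hconc (x t)) (hmemY t) hysY (hgy (x t) (y t))
  -- projection inequality
  have c3 : ⟪G, ys - y (t + 1)⟫ ≤ ℓ * ⟪y (t + 1) - y t, ys - y (t + 1)⟫ := by
    have hproj := (hP (y t + (1 / ℓ) • G)).2 ys hysY
    rw [← hyt1] at hproj
    have hexp : y t + (1 / ℓ) • G - y (t + 1) = (1 / ℓ) • G - (y (t + 1) - y t) := by abel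
    rw [hexp, inner_sub_left, real_inner_smul_left] at hproj
    have h2 : (1 / ℓ) * ⟪G, ys - y (t + 1)⟫ ≤ ⟪y (t + 1) - y t, ys - y (t + 1)⟫ := by
      linarith
    calc ⟪G, ys - y (t + 1)⟫ = ℓ * ((1 / ℓ) * ⟪G, ys - y (t + 1)⟫) := by
          field_simp
      _ ≤ ℓ * ⟪y (t + 1) - y t, ys - y (t + 1)⟫ := mul_le_mul_of_nonneg_left h2 hℓ.le
  -- algebraic identity
  have hid : ℓ / 2 * (‖y t - ys‖ ^ 2 - ‖y (t + 1) - ys‖ ^ 2)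
      = ℓ / 2 * ‖y (t + 1) - y t‖ ^ 2 + ℓ * ⟪y (t + 1) - y t, ys - y (t + 1)⟫ := by
    have e1 : y t - ys = (y t - y (t + 1)) + (y (t + 1) - ys) := by abel
    rw [e1, norm_add_sq_real]
    have e2 : ⟪y t - y (t + 1), y (t + 1) - ys⟫ = ⟪y (t + 1) - y t, ys - y (t + 1)⟫ := by
      rw [show y t - y (t + 1) = -(y (t + 1) - y t) by abel,
        show y (t + 1) - ys = -(ys - y (t + 1)) by abel, inner_neg_neg]
    rw [e2, norm_sub_rev (y t) (y (t + 1))]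
    ring
  have hsplit : ⟪G, ys - y t⟫ = ⟪G, y (t + 1) - y t⟫ + ⟪G, ys - y (t + 1)⟫ := by
    rw [← inner_add_right]
    congr 1
    abel
  -- key inequality
  have KI : f (x t) ys ≤ f (x t) (y (t + 1))
      + ℓ / 2 * (‖y t - ys‖ ^ 2 - ‖y (t + 1) - ys‖ ^ 2) := by
    linarith [c1, c2, c3, hid, hsplit]
  -- bound 1
  have hb1 : Φ (x t) - f (x t) ys ≤ 2 * L * ‖x t - x s‖ := by
    rw [hΦeq (x t)]
    have hytY : ystar (x t) ∈ Y := (hystar (x t)).1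
    have a1 : f (x t) (ystar (x t)) - f (x s) (ystar (x t)) ≤ L * ‖x t - x s‖ :=
      (abs_le.mp (hLip _ hytY (x t) (x s))).2.trans_eq rfl |>.trans (le_refl _)
    have a2 : f (x s) (ystar (x t)) ≤ f (x s) ys := isMaxOn_iff.mp (hystar (x s)).2 _ hytY
    have a3 : f (x s) ys - f (x t) ys ≤ L * ‖x t - x s‖ := by
      have := (abs_le.mp (hLip ys hysY (x s) (x t))).2
      rwa [norm_sub_rev (x s) (x t)] at this
    linarith
  -- bound 2
  have hb2 : f (x t) (y (t + 1)) - f (x (t + 1)) (y (t + 1)) ≤ L * (ηx * L) := by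
    have h1 := (abs_le.mp (hLip (y (t + 1)) (hmemY (t + 1)) (x t) (x (t + 1)))).2
    have h2 : ‖x t - x (t + 1)‖ ≤ ηx * L := by
      rw [norm_sub_rev]; exact hxstep t
    nlinarith [h1, h2]
  -- combine
  have hd := hxdist s t hst
  have hd2 : 2 * L * ‖x t - x s‖ ≤ 2 * L * (((t : ℝ) - s) * (ηx * L)) :=
    mul_le_mul_of_nonneg_left hd (by positivity)
  have hfin : 2 * L * (((t : ℝ) - s) * (ηx * L)) + L * (ηx * L)
      = ηx * L ^ 2 * (2 * (t : ℝ) - 2 * (s : ℝ) + 1) := by ring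
  linarith [KI, hb1, hb2, hd2]
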